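/- There exists a universal constant C > 0 with the following property: if ω ∈ L²(ℝ²) is compactly supported and radially symmetric, i.e. ω(x) = ϕ(|x|) for some function ϕ, then the velocity u = K ∗ ω is essentially bounded and ‖u‖_{L^∞(ℝ²)} ≤ C ‖ω‖_{L²(ℝ²)}. -/

import Mathlib

open MeasureTheory Real Metric Filter
open scoped ENNReal Topology
open scoped NNReal

/-- The plane `ℝ²` with the Euclidean norm. -/
noncomputable abbrev E2 : Type := EuclideanSpace ℝ (Fin 2)

/-- The 2D Biot–Savart kernel `K(x) = x^⊥ / (2π|x|²)`. -/
noncomputable def K2 (x : E2) : E2 :=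
  (2 * Real.pi * ‖x‖ ^ 2)⁻¹ • (WithLp.equiv 2 (Fin 2 → ℝ)).symm ![-(x 1), x 0]

/-- The velocity field `u = K ∗ ω` obtained from a vorticity `ω` by the Biot–Savart law. -/
noncomputable def vel (ω : E2 → ℝ) (x : E2) : E2 := ∫ y, ω y • K2 (x - y)

noncomputable def Kc (z : ℂ) : ℂ := (2 * Real.pi * ‖z‖ ^ 2)⁻¹ • (Complex.I * z)

lemma Kc_eq (z : ℂ) :
    Kc z = (2 * Real.pi : ℂ)⁻¹ * (Complex.I * ((starRingEnd ℂ) z)⁻¹) := by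
  unfold Kc
  rcases eq_or_ne z 0 with rfl | hz
  · simp
  · have h1 : ((starRingEnd ℂ) z)⁻¹ = z * ((Complex.normSq z : ℝ) : ℂ)⁻¹ := by
      rw [Complex.inv_def]
      simp [Complex.normSq_conj]
    rw [h1]
    have h2 : (‖z‖ ^ 2 : ℝ) = Complex.normSq z := Complex.sq_norm z
    rw [Complex.real_smul]
    push_cast [h2]
    have hn : (Complex.normSq z : ℂ) ≠ 0 := by
      simpa [Complex.normSq_eq_zero] using hz
    have hpi : (2 * Real.pi : ℂ) ≠ 0 := by
      simp [Real.pi_ne_zero]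
    field_simp

section CircleInt

lemma sphere_ne_zero {r : ℝ} (h0 : 0 < r) {z : ℂ} (hz : z ∈ Metric.sphere (0:ℂ) r) :
    z ≠ 0 := by
  simp only [Metric.mem_sphere, Complex.dist_eq, sub_zero] at hz
  intro h; rw [h] at hz; simp at hz; exact h0.ne hz

lemma circleInt_aux {a : ℂ} {r : ℝ} (h0 : 0 < r) :
    (∮ z in C(0, r), (z⁻¹ * (a - z)⁻¹)) =
      Complex.I * ∫ θ in (0:ℝ)..2*Real.pi, (a - circleMap 0 r θ)⁻¹ := by
  rw [circleIntegral, ← intervalIntegral.integral_const_mul]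
  refine intervalIntegral.integral_congr fun θ _ => ?_
  have hz : circleMap 0 r θ ≠ 0 := circleMap_ne_center h0.ne'
  rw [deriv_circleMap]
  simp only [smul_eq_mul, zero_add]
  rw [show circleMap 0 r θ * Complex.I * ((circleMap 0 r θ)⁻¹ * (a - circleMap 0 r θ)⁻¹)
      = (circleMap 0 r θ * (circleMap 0 r θ)⁻¹) * (Complex.I * (a - circleMap 0 r θ)⁻¹) by ring,
    mul_inv_cancel₀ hz, one_mul]

lemma circleInt_one_add {a : ℂ} {r : ℝ} (h0 : 0 < r) (hne : ‖a‖ ≠ r) (ha : a ≠ 0) :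
    (∮ z in C(0, r), (z⁻¹ * (a - z)⁻¹)) =
      a⁻¹ * ((∮ z in C(0, r), z⁻¹) + (∮ z in C(0, r), (a - z)⁻¹)) := by
  have h1 : CircleIntegrable (fun z : ℂ => z⁻¹) 0 r := by
    have h := (circleIntegrable_sub_inv_iff (c := (0:ℂ)) (w := 0) (R := r))
    simp only [sub_zero] at h
    apply h.2
    right
    simp only [Metric.mem_sphere, Complex.dist_eq, sub_zero, map_zero, norm_zero, abs_of_pos h0]
    exact fun hh => h0.ne' hh.symm
  have h2 : CircleIntegrable (fun z : ℂ => (a - z)⁻¹) 0 r := by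
    have hb : CircleIntegrable (fun z : ℂ => (z - a)⁻¹) 0 r := by
      apply (circleIntegrable_sub_inv_iff (c := (0:ℂ)) (w := a) (R := r)).2
      right
      simp only [Metric.mem_sphere, Complex.dist_eq, sub_zero, abs_of_pos h0]
      exact fun hh => hne hh
    have hfun : (fun z : ℂ => (a - z)⁻¹) = fun z : ℂ => -((z - a)⁻¹) := by
      funext z; rw [← inv_neg]; ring_nf
    rw [hfun]
    exact hb.neg
  have hsmul := circleIntegral.integral_smul (E := ℂ) (𝕜 := ℂ) a⁻¹
    (fun z : ℂ => z⁻¹ + (a - z)⁻¹) 0 r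
  simp only [smul_eq_mul] at hsmul
  have hadd : (∮ z in C(0, r), (z⁻¹ + (a - z)⁻¹)) =
      (∮ z in C(0, r), z⁻¹) + (∮ z in C(0, r), (a - z)⁻¹) := by
    have hfun2 : (fun z : ℂ => z⁻¹ + (a - z)⁻¹) = fun z : ℂ => z⁻¹ - (-((a - z)⁻¹)) := by
      funext z; ring
    have hnegint : (∮ z in C(0, r), -((a - z)⁻¹)) = -(∮ z in C(0, r), (a - z)⁻¹) := by
      simp [circleIntegral, smul_neg, intervalIntegral.integral_neg]
    calc (∮ z in C(0, r), (z⁻¹ + (a - z)⁻¹))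
        = ∮ z in C(0, r), (z⁻¹ - (-((a - z)⁻¹))) := by rw [← hfun2]
      _ = (∮ z in C(0, r), z⁻¹) - (∮ z in C(0, r), -((a - z)⁻¹)) :=
          circleIntegral.integral_sub h1 h2.neg
      _ = (∮ z in C(0, r), z⁻¹) + (∮ z in C(0, r), (a - z)⁻¹) := by
          rw [hnegint]; ring
  rw [← hadd, ← hsmul]
  refine circleIntegral.integral_congr h0.le fun z hz => ?_
  have hz0 : z ≠ 0 := sphere_ne_zero h0 hz
  have hza : a - z ≠ 0 := by
    intro h
    have hem : z = a := by linear_combination -h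
    rw [hem] at hz
    simp only [Metric.mem_sphere, Complex.dist_eq, sub_zero] at hz
    exact hne hz
  show z⁻¹ * (a - z)⁻¹ = a⁻¹ * (z⁻¹ + (a - z)⁻¹)
  field_simp
  ring

lemma int_inv_out {a : ℂ} {r : ℝ} (h0 : 0 < r) (h : r < ‖a‖) :
    ∫ θ in (0:ℝ)..2*Real.pi, (a - circleMap 0 r θ)⁻¹ = 2 * Real.pi / a := by
  set J := ∫ θ in (0:ℝ)..2*Real.pi, (a - circleMap 0 r θ)⁻¹ with hJ
  have ha : a ≠ 0 := by
    intro h'; rw [h'] at h; simp at h; linarith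
  have hne : ‖a‖ ≠ r := h.ne'
  have hzero : (∮ z in C(0, r), (a - z)⁻¹) = 0 := by
    apply Complex.circleIntegral_eq_zero_of_differentiable_on_off_countable h0.le
      Set.countable_empty
    · intro z hz
      apply ContinuousAt.continuousWithinAt
      apply ContinuousAt.inv₀ (by fun_prop)
      intro hc
      have hza : z = a := by linear_combination -hc
      rw [hza] at hz
      simp only [Metric.mem_closedBall, Complex.dist_eq, sub_zero] at hz
      linarith
    · intro z hz
      apply DifferentiableAt.inv (by fun_prop)
      intro hc
      have hza : z = a := by linear_combination -hc
      rw [hza] at hz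
      simp only [Set.mem_diff, Metric.mem_ball, Complex.dist_eq, sub_zero] at hz
      linarith [hz.1]
  have hone : (∮ z in C(0, r), z⁻¹) = 2 * Real.pi * Complex.I := by
    have hbb := circleIntegral.integral_sub_inv_of_mem_ball
      (c := (0:ℂ)) (w := 0) (R := r) (by simpa using h0)
    simpa using hbb
  have key := (circleInt_aux (a := a) h0).symm.trans (circleInt_one_add h0 hne ha)
  rw [hzero, hone, add_zero, ← hJ] at key
  -- key : I * J = a⁻¹ * (2πI)
  have eq2 : a * (Complex.I * J) = 2 * Real.pi * Complex.I := by
    rw [key]; field_simp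
  rw [eq_div_iff ha]
  apply mul_left_cancel₀ Complex.I_ne_zero
  linear_combination eq2

lemma int_inv_in {a : ℂ} {r : ℝ} (h0 : 0 < r) (ha : a ≠ 0) (h : ‖a‖ < r) :
    ∫ θ in (0:ℝ)..2*Real.pi, (a - circleMap 0 r θ)⁻¹ = 0 := by
  set J := ∫ θ in (0:ℝ)..2*Real.pi, (a - circleMap 0 r θ)⁻¹ with hJ
  have hne : ‖a‖ ≠ r := h.ne
  have hone : (∮ z in C(0, r), z⁻¹) = 2 * Real.pi * Complex.I := by
    have hbb := circleIntegral.integral_sub_inv_of_mem_ball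
      (c := (0:ℂ)) (w := 0) (R := r) (by simpa using h0)
    simpa using hbb
  have htwo : (∮ z in C(0, r), (a - z)⁻¹) = -(2 * Real.pi * Complex.I) := by
    have hmem : a ∈ Metric.ball (0:ℂ) r := by
      simpa [Metric.mem_ball, Complex.dist_eq] using h
    have hb := circleIntegral.integral_sub_inv_of_mem_ball hmem
    have hneg : (fun z : ℂ => (a - z)⁻¹) = fun z : ℂ => -((z - a)⁻¹) := by
      funext z; rw [← inv_neg]; ring_nf
    calc (∮ z in C(0, r), (a - z)⁻¹) = ∮ z in C(0, r), -((z - a)⁻¹) := by rw [← hneg]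
      _ = -(∮ z in C(0, r), (z - a)⁻¹) := by
          simp [circleIntegral, smul_neg, intervalIntegral.integral_neg]
      _ = -(2 * Real.pi * Complex.I) := by rw [hb]
  have key := (circleInt_aux (a := a) h0).symm.trans (circleInt_one_add h0 hne ha)
  rw [hone, htwo, add_neg_cancel, mul_zero, ← hJ] at key
  rcases mul_eq_zero.1 key with hc | hc
  · exact absurd hc Complex.I_ne_zero
  · exact hc

end CircleInt

section Avg

lemma shift_integral (A : ℂ) {B : ℂ} (hB : B ≠ 0) :
    (∫ θ in (0:ℝ)..2*Real.pi, (A - Complex.exp (-(θ:ℂ) * Complex.I) * B)⁻¹)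
      = ∫ θ in (0:ℝ)..2*Real.pi, (A - circleMap 0 (‖B‖) θ)⁻¹ := by
  set G : ℝ → ℂ := fun θ => (A - Complex.exp ((θ:ℂ) * Complex.I) * B)⁻¹ with hG
  have hGper : Function.Periodic G (2 * Real.pi) := by
    intro θ
    simp only [hG]
    congr 2
    push_cast
    rw [add_mul, Complex.exp_add, Complex.exp_two_pi_mul_I, mul_one]
  have step1 : (∫ θ in (0:ℝ)..2*Real.pi, (A - Complex.exp (-(θ:ℂ) * Complex.I) * B)⁻¹)
      = ∫ θ in (0:ℝ)..2*Real.pi, G θ := by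
    have h1 : (∫ θ in (0:ℝ)..2*Real.pi, (A - Complex.exp (-(θ:ℂ) * Complex.I) * B)⁻¹)
        = ∫ θ in (0:ℝ)..2*Real.pi, G (-θ) := by
      refine intervalIntegral.integral_congr fun θ _ => ?_
      simp only [hG]
      push_cast
      ring_nf
    rw [h1, intervalIntegral.integral_comp_neg G]
    have := hGper.intervalIntegral_add_eq (-(2*Real.pi)) 0
    rw [neg_add_cancel, zero_add] at this
    simpa using this
  rw [step1]
  set r := ‖B‖ with hr
  set H : ℝ → ℂ := fun t => (A - circleMap 0 r t)⁻¹ with hH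
  have hHper : Function.Periodic H (2 * Real.pi) :=
    (periodic_circleMap 0 r).comp fun z => (A - z)⁻¹
  have step2 : ∀ θ : ℝ, G θ = H (θ + B.arg) := by
    intro θ
    simp only [hG, hH]
    congr 2
    rw [circleMap, zero_add]
    push_cast
    rw [add_mul, Complex.exp_add]
    rw [show ((r:ℂ)) * (Complex.exp ((θ:ℂ)*Complex.I) * Complex.exp ((B.arg:ℂ)*Complex.I))
        = Complex.exp ((θ:ℂ)*Complex.I) * ((r:ℂ) * Complex.exp ((B.arg:ℂ)*Complex.I)) by ring]
    rw [hr, Complex.norm_mul_exp_arg_mul_I B]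
  calc (∫ θ in (0:ℝ)..2*Real.pi, G θ) = ∫ θ in (0:ℝ)..2*Real.pi, H (θ + B.arg) :=
        intervalIntegral.integral_congr fun θ _ => step2 θ
    _ = ∫ θ in (0 + B.arg)..(2*Real.pi + B.arg), H θ :=
        intervalIntegral.integral_comp_add_right H B.arg
    _ = ∫ θ in (0:ℝ)..2*Real.pi, H θ := by
        have := hHper.intervalIntegral_add_eq B.arg 0
        rw [zero_add] at this
        rw [zero_add, add_comm (2*Real.pi) B.arg, this]

lemma conj_aux (x y : ℂ) (θ : ℝ) :
    (starRingEnd ℂ) (x - Complex.exp ((θ:ℂ) * Complex.I) * y)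
      = (starRingEnd ℂ) x - Complex.exp (-(θ:ℂ) * Complex.I) * (starRingEnd ℂ) y := by
  rw [map_sub, map_mul, ← Complex.exp_conj]
  congr 2
  rw [map_mul, Complex.conj_ofReal, Complex.conj_I]
  ring

lemma avg_in {x y : ℂ} (hx : x ≠ 0) (h : ‖y‖ < ‖x‖) :
    (∫ θ in (0:ℝ)..2*Real.pi, Kc (x - Complex.exp ((θ:ℂ) * Complex.I) * y))
      = (2*Real.pi : ℝ) • Kc x := by
  have hA : (starRingEnd ℂ) x ≠ 0 := by simpa using hx
  have hπ : (2 * Real.pi : ℂ) ≠ 0 := by simp [Real.pi_ne_zero]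
  have hstep : (∫ θ in (0:ℝ)..2*Real.pi, Kc (x - Complex.exp ((θ:ℂ) * Complex.I) * y))
      = ((2*Real.pi : ℂ)⁻¹ * Complex.I) *
        ∫ θ in (0:ℝ)..2*Real.pi,
          ((starRingEnd ℂ) x - Complex.exp (-(θ:ℂ) * Complex.I) * (starRingEnd ℂ) y)⁻¹ := by
    rw [← intervalIntegral.integral_const_mul]
    refine intervalIntegral.integral_congr fun θ _ => ?_
    rw [Kc_eq, conj_aux]
    ring
  rw [hstep]
  rcases eq_or_ne y 0 with rfl | hy
  · simp only [map_zero, zero_mul, mul_zero, sub_zero]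
    rw [intervalIntegral.integral_const, sub_zero, Kc_eq]
    rw [Complex.real_smul, Complex.real_smul]
    push_cast
    ring
  · have hB : (starRingEnd ℂ) y ≠ 0 := by simpa using hy
    have h0 : 0 < ‖(starRingEnd ℂ) y‖ := by
      simpa [Complex.norm_conj] using norm_pos_iff.mpr hy
    have hlt : ‖(starRingEnd ℂ) y‖ < ‖(starRingEnd ℂ) x‖ := by
      simpa [Complex.norm_conj] using h
    rw [shift_integral _ hB, int_inv_out h0 hlt, Kc_eq, Complex.real_smul]
    push_cast
    field_simp

lemma avg_out {x y : ℂ} (hx : x ≠ 0) (h : ‖x‖ < ‖y‖) :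
    (∫ θ in (0:ℝ)..2*Real.pi, Kc (x - Complex.exp ((θ:ℂ) * Complex.I) * y)) = 0 := by
  have hA : (starRingEnd ℂ) x ≠ 0 := by simpa using hx
  have hy : y ≠ 0 := by
    intro hy; rw [hy] at h; simp only [norm_zero] at h
    exact absurd h (not_lt.2 (norm_nonneg x))
  have hB : (starRingEnd ℂ) y ≠ 0 := by simpa using hy
  have hlt : ‖(starRingEnd ℂ) x‖ < ‖(starRingEnd ℂ) y‖ := by
    simpa [Complex.norm_conj] using h
  have hstep : (∫ θ in (0:ℝ)..2*Real.pi, Kc (x - Complex.exp ((θ:ℂ) * Complex.I) * y))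
      = ((2*Real.pi : ℂ)⁻¹ * Complex.I) *
        ∫ θ in (0:ℝ)..2*Real.pi,
          ((starRingEnd ℂ) x - Complex.exp (-(θ:ℂ) * Complex.I) * (starRingEnd ℂ) y)⁻¹ := by
    rw [← intervalIntegral.integral_const_mul]
    refine intervalIntegral.integral_congr fun θ _ => ?_
    rw [Kc_eq, conj_aux]
    ring
  rw [hstep, shift_integral _ hB, int_inv_in (by simpa [Complex.norm_conj] using norm_pos_iff.mpr hy) hA hlt, mul_zero]

end Avg

section MainC

lemma norm_Kc {z : ℂ} (hz : z ≠ 0) : ‖Kc z‖ = (2 * Real.pi * ‖z‖)⁻¹ := by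
  have h0 : 0 < ‖z‖ := norm_pos_iff.mpr hz
  unfold Kc
  rw [norm_smul, Real.norm_eq_abs, norm_mul, Complex.norm_I, one_mul,
    abs_of_pos (by positivity)]
  field_simp

lemma measurable_Kc : Measurable Kc := by
  unfold Kc
  apply Measurable.fun_smul
  · exact (measurable_const.mul ((continuous_norm.measurable).pow_const 2)).inv
  · fun_prop

lemma main_c (ωc : ℂ → ℝ) (ϕ : ℝ → ℝ) (hm : MemLp ωc 2 volume)
    (hrad : ∀ z, ωc z = ϕ (‖z‖)) (ξ : ℂ) (hξ : ξ ≠ 0) :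
    ‖∫ y, ωc y • Kc (ξ - y)‖ ≤ (eLpNorm ωc 2 volume).toReal := by
  by_cases hint : Integrable (fun y => ωc y • Kc (ξ - y)) volume
  swap
  · rw [integral_undef hint]
    simp [ENNReal.toReal_nonneg]
  set N := (eLpNorm ωc 2 volume).toReal with hN
  have hN0 : 0 ≤ N := ENNReal.toReal_nonneg
  set R := ‖ξ‖ with hRdef
  have hR : 0 < R := norm_pos_iff.mpr hξ
  set g : ℂ → ℂ := fun y => ωc y • Kc (ξ - y) with hg
  -- rotations are measure preserving
  have hroteq : ∀ θ : ℝ, (fun y : ℂ => Complex.exp ((θ:ℂ) * Complex.I) * y)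
      = ⇑(rotation (Circle.exp θ)) := by
    intro θ; funext y; rw [rotation_apply, Circle.coe_exp]
  have hrot : ∀ θ : ℝ, MeasurePreserving
      (fun y : ℂ => Complex.exp ((θ:ℂ) * Complex.I) * y) volume volume := by
    intro θ
    rw [hroteq θ]
    exact (rotation (Circle.exp θ)).measurePreserving
  have hemb : ∀ θ : ℝ, MeasurableEmbedding
      (fun y : ℂ => Complex.exp ((θ:ℂ) * Complex.I) * y) := by
    intro θ
    rw [hroteq θ]
    exact (rotation (Circle.exp θ)).toHomeomorph.measurableEmbedding
  have hcomp : ∀ θ : ℝ, (fun y : ℂ => ωc y • Kc (ξ - Complex.exp ((θ:ℂ)*Complex.I) * y))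
      = g ∘ (fun y : ℂ => Complex.exp ((θ:ℂ)*Complex.I) * y) := by
    intro θ; funext y
    simp only [hg, Function.comp_apply]
    congr 1
    rw [hrad, hrad ((Complex.exp ((θ:ℂ)*Complex.I) * y))]
    congr 1
    rw [norm_mul, Complex.norm_exp_ofReal_mul_I, one_mul]
  have hint_slice : ∀ θ : ℝ, Integrable
      (fun y : ℂ => ωc y • Kc (ξ - Complex.exp ((θ:ℂ)*Complex.I) * y)) volume := by
    intro θ
    rw [hcomp θ]
    exact ((hrot θ).integrable_comp_emb (hemb θ)).2 hint
  have hieq : ∀ θ : ℝ, (∫ y : ℂ, ωc y • Kc (ξ - Complex.exp ((θ:ℂ)*Complex.I) * y))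
      = ∫ y, g y := by
    intro θ
    rw [hcomp θ]
    exact (hrot θ).integral_comp (hemb θ) g
  set μθ : Measure ℝ := volume.restrict (Set.Ioc (0:ℝ) (2*Real.pi)) with hμθ
  haveI : IsFiniteMeasure μθ := by
    constructor
    rw [hμθ, Measure.restrict_apply_univ]
    exact measure_Ioc_lt_top
  set F : ℝ × ℂ → ℂ := fun p => ωc p.2 • Kc (ξ - Complex.exp ((p.1:ℂ)*Complex.I) * p.2) with hF
  have hFm : AEStronglyMeasurable F (μθ.prod volume) := by
    apply AEStronglyMeasurable.fun_smul
    · exact hm.1.comp_quasiMeasurePreserving MeasureTheory.Measure.quasiMeasurePreserving_snd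
    · apply Measurable.aestronglyMeasurable
      exact measurable_Kc.comp (by fun_prop)
  have hFint : Integrable F (μθ.prod volume) := by
    rw [MeasureTheory.integrable_prod_iff hFm]
    refine ⟨ae_of_all _ fun θ => hint_slice θ, ?_⟩
    have hfun : (fun θ : ℝ => ∫ y, ‖F (θ, y)‖) = fun _ : ℝ => ∫ y, ‖g y‖ := by
      funext θ
      have h1 : (fun y : ℂ => ‖F (θ, y)‖)
          = (fun z => ‖g z‖) ∘ (fun y : ℂ => Complex.exp ((θ:ℂ)*Complex.I) * y) := by
        funext y
        have := congrFun (hcomp θ) y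
        simp only [hF, Function.comp_apply]
        rw [this]
        rfl
      rw [h1]
      exact (hrot θ).integral_comp (hemb θ) (fun z => ‖g z‖)
    rw [hfun]
    exact integrable_const _
  have hswap := MeasureTheory.integral_integral_swap
    (f := fun (θ : ℝ) (y : ℂ) => ωc y • Kc (ξ - Complex.exp ((θ:ℂ)*Complex.I) * y))
    (μ := μθ) (ν := volume) hFint
  have hLHS : (∫ θ, (∫ y : ℂ, ωc y • Kc (ξ - Complex.exp ((θ:ℂ)*Complex.I) * y)) ∂μθ)
      = (2*Real.pi) • ∫ y, g y := by
    rw [show (fun θ : ℝ => ∫ y : ℂ, ωc y • Kc (ξ - Complex.exp ((θ:ℂ)*Complex.I) * y))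
        = fun _ : ℝ => ∫ y, g y from funext hieq]
    rw [integral_const]
    congr 1
    rw [hμθ, Measure.real, Measure.restrict_apply_univ, Real.volume_Ioc, sub_zero,
      ENNReal.toReal_ofReal Real.two_pi_pos.le]
  have hae1 : ∀ᵐ y : ℂ, ‖y‖ ≠ R := by
    have hs : volume (Metric.sphere (0:ℂ) R) = 0 :=
      MeasureTheory.Measure.addHaar_sphere volume 0 R
    rw [MeasureTheory.ae_iff]
    convert hs using 2
    ext y
    simp [Metric.mem_sphere, Complex.dist_eq]
  have hRHS : (∫ y : ℂ, ∫ θ, ωc y • Kc (ξ - Complex.exp ((θ:ℂ)*Complex.I) * y) ∂μθ)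
      = (∫ y in Metric.ball (0:ℂ) R, ωc y) • ((2*Real.pi : ℝ) • Kc ξ) := by
    have hptwise : ∀ᵐ y : ℂ, (∫ θ, ωc y • Kc (ξ - Complex.exp ((θ:ℂ)*Complex.I) * y) ∂μθ)
        = (Set.indicator (Metric.ball (0:ℂ) R) ωc y) • ((2*Real.pi : ℝ) • Kc ξ) := by
      filter_upwards [hae1] with y hy
      rw [integral_smul]
      have hI2 : (∫ θ, Kc (ξ - Complex.exp ((θ:ℂ)*Complex.I) * y) ∂μθ)
          = ∫ θ in (0:ℝ)..2*Real.pi, Kc (ξ - Complex.exp ((θ:ℂ)*Complex.I) * y) :=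
        (intervalIntegral.integral_of_le Real.two_pi_pos.le).symm
      rcases lt_or_gt_of_ne hy with hlt | hgt
      · have hmem : y ∈ Metric.ball (0:ℂ) R := by
          simpa [Metric.mem_ball, Complex.dist_eq] using hlt
        rw [hI2, avg_in hξ hlt, Set.indicator_of_mem hmem]
      · have hmem : y ∉ Metric.ball (0:ℂ) R := by
          simp only [Metric.mem_ball, Complex.dist_eq, sub_zero, not_lt]
          exact hgt.le
        rw [hI2, avg_out hξ hgt, smul_zero, Set.indicator_of_notMem hmem, zero_smul]
    rw [integral_congr_ae hptwise, integral_smul_const, integral_indicator measurableSet_ball]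
  have hM : (∫ y, g y) = (∫ y in Metric.ball (0:ℂ) R, ωc y) • Kc ξ := by
    have h2π : (2*Real.pi : ℝ) ≠ 0 := Real.two_pi_pos.ne'
    apply smul_right_injective ℂ h2π
    show (2*Real.pi : ℝ) • (∫ y, g y) = (2*Real.pi : ℝ) • _
    rw [hLHS.symm.trans (hswap.trans hRHS)]
    rw [smul_comm]
  -- the final bound
  set M := ∫ y in Metric.ball (0:ℂ) R, ωc y with hMdef
  have hKcn : ‖Kc ξ‖ = (2 * Real.pi * R)⁻¹ := norm_Kc hξ
  set restr : Measure ℂ := volume.restrict (Metric.ball (0:ℂ) R) with hrestr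
  haveI : IsFiniteMeasure restr := by
    constructor
    rw [hrestr, Measure.restrict_apply_univ]
    exact measure_ball_lt_top
  have hmb : MemLp ωc 2 restr := hm.restrict _
  have h1 : ‖M‖ ≤ (eLpNorm ωc 1 restr).toReal := by
    have hle := MeasureTheory.norm_integral_le_lintegral_norm (μ := restr) ωc
    rw [eLpNorm_one_eq_lintegral_enorm]
    simp only [← ofReal_norm_eq_enorm]
    exact hle
  have h2 : eLpNorm ωc 1 restr ≤ eLpNorm ωc 2 restr * (volume (Metric.ball (0:ℂ) R)) ^ (1/2 : ℝ) := by
    have h := MeasureTheory.eLpNorm_le_eLpNorm_mul_rpow_measure_univ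
      (show (1:ℝ≥0∞) ≤ 2 by norm_num) hmb.1
    have hexp : (1 / (1:ℝ≥0∞).toReal - 1 / (2:ℝ≥0∞).toReal) = (1/2 : ℝ) := by norm_num
    rwa [hexp, Measure.restrict_apply_univ] at h
  have h3 : eLpNorm ωc 2 restr ≤ eLpNorm ωc 2 volume :=
    eLpNorm_mono_measure _ Measure.restrict_le_self
  have h4 : (volume (Metric.ball (0:ℂ) R)) ^ (1/2:ℝ) ≤ ENNReal.ofReal (2*R) := by
    rw [Complex.volume_ball]
    have hπ4 : (NNReal.pi : ℝ≥0∞) ≤ 4 := by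
      have hn : (NNReal.pi : ℝ≥0) ≤ (4 : ℝ≥0) := by
        rw [← NNReal.coe_le_coe]
        push_cast
        exact Real.pi_le_four
      calc (NNReal.pi : ℝ≥0∞) ≤ ((4:ℝ≥0) : ℝ≥0∞) := ENNReal.coe_le_coe.2 hn
        _ = 4 := by norm_num
    calc (ENNReal.ofReal R ^ 2 * NNReal.pi) ^ (1/2:ℝ)
        ≤ (ENNReal.ofReal R ^ 2 * 4) ^ (1/2:ℝ) := by gcongr
      _ = ENNReal.ofReal (2*R) := by
          rw [show ENNReal.ofReal R ^ 2 * 4 = (ENNReal.ofReal (2*R))^2 by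
            rw [ENNReal.ofReal_mul (by norm_num), mul_pow]
            norm_num [ENNReal.ofReal_ofNat]
            ring]
          rw [← ENNReal.rpow_natCast _ 2, ← ENNReal.rpow_mul]
          norm_num
  have h5 : eLpNorm ωc 1 restr ≤ eLpNorm ωc 2 volume * ENNReal.ofReal (2*R) :=
    le_trans h2 (mul_le_mul' h3 h4)
  have hfin : eLpNorm ωc 2 volume * ENNReal.ofReal (2*R) ≠ ⊤ :=
    ENNReal.mul_ne_top hm.2.ne ENNReal.ofReal_ne_top
  have h6 : (eLpNorm ωc 1 restr).toReal ≤ N * (2*R) := by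
    have := ENNReal.toReal_mono hfin h5
    rwa [ENNReal.toReal_mul, ENNReal.toReal_ofReal (by positivity)] at this
  have hMb : |M| ≤ N * (2*R) := by
    rw [← Real.norm_eq_abs]
    exact h1.trans h6
  rw [hM, norm_smul, Real.norm_eq_abs, hKcn]
  calc |M| * (2 * Real.pi * R)⁻¹ ≤ (N * (2*R)) * (2 * Real.pi * R)⁻¹ := by
        apply mul_le_mul_of_nonneg_right hMb
        positivity
    _ = N / Real.pi := by
        field_simp
    _ ≤ N := by
        apply div_le_self hN0
        linarith [Real.pi_gt_three]

end MainC

lemma K2_e (z : ℂ) : K2 (Complex.orthonormalBasisOneI.repr z)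
    = Complex.orthonormalBasisOneI.repr (Kc z) := by
  unfold K2 Kc
  rw [LinearIsometryEquiv.map_smul]
  have hn : ‖Complex.orthonormalBasisOneI.repr z‖ = ‖z‖ := by
    rw [LinearIsometryEquiv.norm_map]
  rw [hn]
  congr 1
  ext i
  fin_cases i <;>
    simp [Complex.mul_re, Complex.mul_im]

/-- there is a universal constant `C > 0` such that for every compactly
supported, radially symmetric `ω ∈ L²(ℝ²)`, the velocity `u = K ∗ ω` is essentially
bounded with `‖u‖_{L^∞} ≤ C ‖ω‖_{L²}`. -/
theorem radial_velocity_bounded :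
    ∃ C : ℝ, 0 < C ∧ ∀ (ω : E2 → ℝ) (ϕ : ℝ → ℝ),
      MemLp ω 2 volume → HasCompactSupport ω → (∀ x, ω x = ϕ ‖x‖) →
      ∀ᵐ x ∂(volume : Measure E2),
        ‖vel ω x‖ ≤ C * (eLpNorm ω 2 volume).toReal := by
  refine ⟨1, one_pos, ?_⟩
  intro ω ϕ hω _hcs hrad
  have h0 : ∀ᵐ x : E2 ∂volume, x ≠ 0 := by
    have hsing : volume ({(0:E2)} : Set E2) = 0 := measure_singleton _
    rw [MeasureTheory.ae_iff]
    convert hsing using 2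
    ext y
    simp [not_not]
  filter_upwards [h0] with x hx
  rw [one_mul]
  set e := Complex.orthonormalBasisOneI.repr with he
  have hmp : MeasurePreserving e volume volume :=
    Complex.orthonormalBasisOneI.measurePreserving_repr
  have hembe : MeasurableEmbedding e := e.toHomeomorph.measurableEmbedding
  set ωc : ℂ → ℝ := fun z => ω (e z) with hωc
  have hradc : ∀ z, ωc z = ϕ (‖z‖) := by
    intro z
    rw [hωc]
    simp only []
    rw [hrad (e z)]
    congr 1
    rw [LinearIsometryEquiv.norm_map]
  have hmc : MemLp ωc 2 volume := hω.comp_measurePreserving hmp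
  have hNeq : eLpNorm ωc 2 volume = eLpNorm ω 2 volume :=
    MeasureTheory.eLpNorm_comp_measurePreserving hω.1 hmp
  set ξ := e.symm x with hξdef
  have hxe : e ξ = x := e.apply_symm_apply x
  have hξ0 : ξ ≠ 0 := by
    intro h
    apply hx
    rw [← hxe, h, map_zero]
  have hvel : vel ω x = e (∫ y, ωc y • Kc (ξ - y)) := by
    unfold vel
    have step1 : (∫ y : E2, ω y • K2 (x - y)) = ∫ z : ℂ, ω (e z) • K2 (x - e z) :=
      (hmp.integral_comp hembe (fun y => ω y • K2 (x - y))).symm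
    have step2 : (fun z : ℂ => ω (e z) • K2 (x - e z))
        = fun z : ℂ => e.toLinearIsometry (ωc z • Kc (ξ - z)) := by
      funext z
      show ω (e z) • K2 (x - e z) = e (ωc z • Kc (ξ - z))
      rw [LinearIsometryEquiv.map_smul]
      congr 1
      rw [← hxe, ← LinearIsometryEquiv.map_sub, K2_e]
    rw [step1, step2]
    exact e.toLinearIsometry.integral_comp_comm (fun z => ωc z • Kc (ξ - z))
  rw [hvel, LinearIsometryEquiv.norm_map, ← hNeq]
  exact main_c ωc ϕ hmc hradc ξ hξ0
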